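/- arXiv:1506.00071 — 2 statements merged into one kernel-verified Lean document; each statement's English description precedes it below -/
import Mathlib

section
/- Let Q ≅ G/K arise from a short exact sequence 1 → K → G → Q → 1, let N_K ⊆ A* be a prefix-closed set of unique normal forms for K over a generating set A of K, and let N_Q be a prefix-closed set of unique normal forms for Q over B, lifted via a set-section b ↦ b̂ to letters B̂ ⊆ G. Then the concatenation language N_G := N_K · N̂_Q is a prefix-closed set of unique normal forms for G over A ∪ B̂: every g ∈ G is represented by exactly one word in N_G. -/
/-- Given a short exact sequence `1 → K → G → Q → 1` (with `K = ker q`),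
a prefix-closed set `N_K` of unique normal forms for `K` over an alphabet `A`,
and a prefix-closed set `N_Q` of unique normal forms for `Q` over `B`, lifted
to letters `B̂ ⊆ G` via a section `b ↦ b̂`, the concatenation language
`N_G = N_K · N̂_Q` is a prefix-closed set of unique normal forms for `G` over
`A ∪ B̂`. -/
theorem extension_normal_forms
    {G Q : Type*} [Group G] [Group Q]
    (q : G →* Q) (hq : Function.Surjective q)
    {A B : Type*}
    -- letters of `A` evaluate into `K = ker q`
    (fA : A → G) (hfA : ∀ x : A, fA x ∈ q.ker)
    -- `B̂ ⊆ G` is recorded by the lift `fB : B → G` with `q ∘ fB` the letters of `B`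
    (fB : B → G)
    (NK : Set (List A))
    (hKpc : ∀ w ∈ NK, ∀ p : List A, p <+: w → p ∈ NK)
    (hKnf : ∀ k ∈ q.ker, ∃! w : List A, w ∈ NK ∧ (w.map fA).prod = k)
    (NQ : Set (List B))
    (hQpc : ∀ w ∈ NQ, ∀ p : List B, p <+: w → p ∈ NQ)
    (hQnf : ∀ x : Q, ∃! w : List B, w ∈ NQ ∧ (w.map (fun b => q (fB b))).prod = x) :
    -- `N_G := N_K · N̂_Q` over the alphabet `A ⊕ B`
    (∀ w ∈ {w : List (A ⊕ B) | ∃ u ∈ NK, ∃ v ∈ NQ,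
        w = u.map Sum.inl ++ v.map Sum.inr},
      ∀ p : List (A ⊕ B), p <+: w →
        p ∈ {w : List (A ⊕ B) | ∃ u ∈ NK, ∃ v ∈ NQ,
          w = u.map Sum.inl ++ v.map Sum.inr}) ∧
    (∀ g : G, ∃! w : List (A ⊕ B),
        (∃ u ∈ NK, ∃ v ∈ NQ, w = u.map Sum.inl ++ v.map Sum.inr) ∧
        (w.map (Sum.elim fA fB)).prod = g) := by
  -- `[] ∈ NK` and `[] ∈ NQ`
  obtain ⟨wK1, ⟨hwK1, _⟩, _⟩ := hKnf 1 (one_mem _)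
  have hnilK : ([] : List A) ∈ NK := hKpc _ hwK1 _ (List.nil_prefix)
  obtain ⟨wQ1, ⟨hwQ1, _⟩, _⟩ := hQnf 1
  have hnilQ : ([] : List B) ∈ NQ := hQpc _ hwQ1 _ (List.nil_prefix)
  -- evaluation of concatenated words
  have hprod : ∀ (u : List A) (v : List B),
      (((u.map Sum.inl ++ v.map Sum.inr).map (Sum.elim fA fB)).prod : G)
        = (u.map fA).prod * (v.map fB).prod := by
    intro u v
    simp [List.map_append, List.map_map, Function.comp]
  -- `q` kills products of `A`-letters
  have hker : ∀ u : List A, q ((u.map fA).prod) = 1 := by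
    intro u
    rw [map_list_prod]
    apply List.prod_eq_one
    intro x hx
    simp only [List.map_map, List.mem_map] at hx
    obtain ⟨a, _, rfl⟩ := hx
    exact hfA a
  constructor
  · rintro w ⟨u, hu, v, hv, rfl⟩ p ⟨t, ht⟩
    rcases List.append_eq_append_iff.mp ht with ⟨a', h1, h2⟩ | ⟨c', h1, h2⟩
    · have hp : p = (u.take p.length).map Sum.inl := by
        rw [List.map_take, h1]
        exact List.take_left.symm
      exact ⟨u.take p.length, hKpc _ hu _ (List.take_prefix _ _), [], hnilQ,
        by simpa using hp⟩
    · have hc : c' = (v.take c'.length).map Sum.inr := by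
        rw [List.map_take, h2]
        exact List.take_left.symm
      exact ⟨u, hu, v.take c'.length, hQpc _ hv _ (List.take_prefix _ _),
        by rw [h1, ← hc]⟩
  · intro g
    obtain ⟨v, ⟨hv, hvp⟩, hvu⟩ := hQnf (q g)
    have hqv : q ((v.map fB).prod) = q g := by
      rw [map_list_prod, List.map_map]
      exact hvp
    have hker' : g * ((v.map fB).prod)⁻¹ ∈ q.ker := by
      rw [MonoidHom.mem_ker, map_mul, map_inv, hqv]
      simp
    obtain ⟨u, ⟨hu, hup⟩, huu⟩ := hKnf _ hker'
    refine ⟨u.map Sum.inl ++ v.map Sum.inr, ⟨⟨u, hu, v, hv, rfl⟩, ?_⟩, ?_⟩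
    · rw [hprod, hup]
      group
    · rintro w ⟨⟨u', hu', v', hv', rfl⟩, hwp⟩
      rw [hprod] at hwp
      have h1 := congrArg q hwp
      rw [map_mul, hker u', one_mul, map_list_prod, List.map_map] at h1
      have hqv' : (v'.map (fun b => q (fB b))).prod = q g := by
        exact h1
      have hv'v : v' = v := hvu v' ⟨hv', hqv'⟩
      subst hv'v
      have hu'u : u' = u := by
        apply huu
        refine ⟨hu', ?_⟩
        rw [← hwp]
        group
      rw [hu'u]
end

section
/- Let H be a finite-index subgroup of a group G, let S ⊆ G be a set of coset representatives for the right cosets of H in G with 1 ∈ S, and let N_H be a prefix-closed set of unique normal forms for H over a finite inverse-closed generating set A of H. Then N_G := N_H ∪ {ut | u ∈ N_H, t ∈ S \ {1}} (viewing each t ∈ S \ {1} as a new letter) is a prefix-closed set of unique normal forms for G over the generating set A ∪ (S \ {1})^{±1}. -/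
/-- Let `H` be a finite-index subgroup of `G`, `S` a set of right-coset
representatives of `H` in `G` with `1 ∈ S`, and `N_H` a prefix-closed set of
unique normal forms for `H` over a finite inverse-closed generating set `A` of
`H`.  Then `N_G := N_H ∪ {ut ∣ u ∈ N_H, t ∈ S \ {1}}`, with each `t ∈ S \ {1}`
a new letter, is a prefix-closed set of unique normal forms for `G` over the
generating set `A ∪ (S \ {1})^{±1}`. -/
theorem finite_index_normal_forms
    {G : Type*} [Group G] (H : Subgroup G) [H.FiniteIndex]
    (S : Set G) (hS1 : (1 : G) ∈ S)
    (hStrans : ∀ g : G, ∃! p : H × S, g = (p.1 : G) * (p.2 : G))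
    {A : Type*} [Fintype A] (f : A → G)
    (hfH : ∀ x : A, f x ∈ H)
    (hinv : ∀ x : A, ∃ y : A, f y = (f x)⁻¹)
    (NH : Set (List A))
    (hHpc : ∀ w ∈ NH, ∀ p : List A, p <+: w → p ∈ NH)
    (hHnf : ∀ h ∈ H, ∃! w : List A, w ∈ NH ∧ (w.map f).prod = h) :
    -- the alphabet is `A ⊕ (S \ {1}) × Bool`, a letter `(t, true)` standing
    -- for `t` and `(t, false)` for `t⁻¹`
    (∀ w ∈ {w : List (A ⊕ ↥(S \ {1}) × Bool) |
        (∃ u ∈ NH, w = u.map Sum.inl) ∨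
        (∃ u ∈ NH, ∃ t : ↥(S \ {1}), w = u.map Sum.inl ++ [Sum.inr (t, true)])},
      ∀ p : List (A ⊕ ↥(S \ {1}) × Bool), p <+: w →
        p ∈ {w : List (A ⊕ ↥(S \ {1}) × Bool) |
          (∃ u ∈ NH, w = u.map Sum.inl) ∨
          (∃ u ∈ NH, ∃ t : ↥(S \ {1}), w = u.map Sum.inl ++ [Sum.inr (t, true)])}) ∧
    (∀ g : G, ∃! w : List (A ⊕ ↥(S \ {1}) × Bool),
        ((∃ u ∈ NH, w = u.map Sum.inl) ∨
          (∃ u ∈ NH, ∃ t : ↥(S \ {1}), w = u.map Sum.inl ++ [Sum.inr (t, true)])) ∧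
        (w.map (Sum.elim f (fun p => if p.2 then (p.1 : G) else (p.1 : G)⁻¹))).prod = g) := by

  classical
  set E : (A ⊕ ↥(S \ {1}) × Bool) → G :=
    Sum.elim f (fun p => if p.2 then (p.1 : G) else (p.1 : G)⁻¹) with hE
  have hmap : ∀ u : List A, ((u.map Sum.inl).map E).prod = (u.map f).prod := by
    intro u; rw [List.map_map]; rfl
  have hpref : ∀ (p : List (A ⊕ ↥(S \ {1}) × Bool)) (u : List A),
      p <+: u.map Sum.inl → ∃ q, q <+: u ∧ p = q.map Sum.inl := by
    intro p u hp
    refine ⟨u.take p.length, List.take_prefix _ _, ?_⟩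
    have h1 := List.prefix_iff_eq_take.mp hp
    rw [List.map_take]
    exact h1
  have hmem : ∀ u : List A, (u.map f).prod ∈ H := by
    intro u
    refine H.list_prod_mem ?_
    intro x hx
    obtain ⟨a, _, rfl⟩ := List.mem_map.mp hx
    exact hfH a
  constructor
  · rintro w hw p hp
    rcases hw with ⟨u, hu, rfl⟩ | ⟨u, hu, t, rfl⟩
    · obtain ⟨q, hq, rfl⟩ := hpref p u hp
      exact Or.inl ⟨q, hHpc u hu q hq, rfl⟩
    · by_cases hl : p.length ≤ u.length
      · have hp' : p <+: u.map Sum.inl := by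
          have := List.prefix_iff_eq_take.mp hp
          rw [List.take_append_of_le_length (by simpa using hl)] at this
          rw [this]; exact List.take_prefix _ _
        obtain ⟨q, hq, rfl⟩ := hpref p u hp'
        exact Or.inl ⟨q, hHpc u hu q hq, rfl⟩
      · have hlen : p.length = (u.map Sum.inl ++ [Sum.inr (t, true)]).length := by
          have h1 := hp.length_le
          simp only [List.length_append, List.length_map, List.length_cons,
            List.length_nil] at h1 ⊢
          omega
        have : p = u.map Sum.inl ++ [Sum.inr (t, true)] :=
          List.IsPrefix.eq_of_length hp hlen
        exact Or.inr ⟨u, hu, t, this⟩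
  · intro g
    obtain ⟨⟨h, t⟩, hg, huniq⟩ := hStrans g
    obtain ⟨u, ⟨huN, huprod⟩, huuniq⟩ := hHnf h h.2
    by_cases ht : (t : G) = 1
    · refine ⟨u.map Sum.inl, ⟨Or.inl ⟨u, huN, rfl⟩, ?_⟩, ?_⟩
      · rw [hmap, huprod, hg, ht, mul_one]
      · rintro w' ⟨(⟨u', hu', rfl⟩ | ⟨u', hu', t', rfl⟩), hprod⟩
        · rw [hmap] at hprod
          have hpair := huniq (⟨⟨(u'.map f).prod, hmem u'⟩, ⟨1, hS1⟩⟩)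
            (by simp [hprod])
          have hh : (⟨(u'.map f).prod, hmem u'⟩ : H) = h := congrArg Prod.fst hpair
          have : u' = u := huuniq u' ⟨hu', by rw [← hh]⟩
          rw [this]
        · exfalso
          rw [List.map_append, List.prod_append, hmap] at hprod
          have ht'prod : (([Sum.inr (t', true)].map E)).prod = (t' : G) := by
            simp [hE]
          rw [ht'prod] at hprod
          have hpair := huniq (⟨⟨(u'.map f).prod, hmem u'⟩, ⟨(t' : G), t'.2.1⟩⟩)
            (by simp [hprod])
          have hts : (⟨(t' : G), t'.2.1⟩ : S) = t := congrArg Prod.snd hpair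
          have h1 : (t' : G) = (t : G) := congrArg Subtype.val hts
          exact t'.2.2 (by rw [Set.mem_singleton_iff, h1, ht])
    · refine ⟨u.map Sum.inl ++ [Sum.inr (⟨⟨t, ⟨t.2, ht⟩⟩, true⟩)],
        ⟨Or.inr ⟨u, huN, ⟨t, ⟨t.2, ht⟩⟩, rfl⟩, ?_⟩, ?_⟩
      · rw [List.map_append, List.prod_append, hmap, huprod]
        simp [hE, hg]
      · rintro w' ⟨(⟨u', hu', rfl⟩ | ⟨u', hu', t', rfl⟩), hprod⟩
        · exfalso
          rw [hmap] at hprod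
          have hpair := huniq (⟨⟨(u'.map f).prod, hmem u'⟩, ⟨1, hS1⟩⟩)
            (by simp [hprod])
          have hts : (⟨(1 : G), hS1⟩ : S) = t := congrArg Prod.snd hpair
          exact ht (congrArg Subtype.val hts).symm
        · rw [List.map_append, List.prod_append, hmap] at hprod
          have ht'prod : (([Sum.inr (t', true)].map E)).prod = (t' : G) := by
            simp [hE]
          rw [ht'prod] at hprod
          have hpair := huniq (⟨⟨(u'.map f).prod, hmem u'⟩, ⟨(t' : G), t'.2.1⟩⟩)
            (by simp [hprod])
          have hh : (⟨(u'.map f).prod, hmem u'⟩ : H) = h := congrArg Prod.fst hpair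
          have hu'u : u' = u := huuniq u' ⟨hu', by rw [← hh]⟩
          have hts : (⟨(t' : G), t'.2.1⟩ : S) = t := congrArg Prod.snd hpair
          have : t' = (⟨(t : G), ⟨t.2, ht⟩⟩ : ↥(S \ {1})) :=
            Subtype.ext (show (t' : G) = (t : G) from congrArg Subtype.val hts)
          rw [hu'u, this]
end
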